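/- Zeroness characterisation: Let P be a special product rule and 𝒜 = (X, F, Δ) a polynomial P-automaton with finite variable set X = {x₁,…,x_k} and initial variable x₁, and let I_n be the ideal of ℚ[X] generated by {Δ_w x₁ : |w| ≤ n}. Let N ∈ ℕ be the stabilisation index of the chain I₀ ⊆ I₁ ⊆ ⋯, i.e., an index with I_N = I_{N+1}. Then ⟦x₁⟧_𝒜 is the zero series if, and only if, ⟦x₁⟧_𝒜(w) = 0 for every word w ∈ Σ* of length at most N. -/

import Mathlib

namespace PSeries

/-- A (formal power) series over alphabet `A` with rational coefficients. -/
abbrev Series (A : Type) : Type := List A → ℚ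

/-- Left derivative of a series by a letter. -/
def deriv {A : Type} (a : A) (f : Series A) : Series A := fun w => f (a :: w)

/-- Right derivative of a series by a letter. -/
def derivR {A : Type} (b : A) (f : Series A) : Series A := fun w => f (w ++ [b])

/-- Reversal of a series. -/
def rev {A : Type} (f : Series A) : Series A := fun w => f w.reverse

/-- Terms over a set of variables `X`:  `u ::= x | 0 | c·u | u + v | u * v`. -/
inductive Term (X : Type) : Type
  | var : X → Term X
  | zero : Term X
  | smul : ℚ → Term X → Term X
  | add : Term X → Term X → Term X
  | mul : Term X → Term X → Term X

namespace Term

/-- Simultaneous substitution of terms for variables. -/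
def subst {X Y : Type} : Term X → (X → Term Y) → Term Y
  | var x, ρ => ρ x
  | zero, _ => zero
  | smul c u, ρ => smul c (u.subst ρ)
  | add u v, ρ => add (u.subst ρ) (v.subst ρ)
  | mul u v, ρ => mul (u.subst ρ) (v.subst ρ)

/-- Semantics of a term on series, with the product symbol interpreted by `m`. -/
def evalS {A X : Type} (m : Series A → Series A → Series A) :
    Term X → (X → Series A) → Series A
  | var x, ρ => ρ x
  | zero, _ => 0
  | smul c u, ρ => c • u.evalS m ρ
  | add u v, ρ => u.evalS m ρ + v.evalS m ρ
  | mul u v, ρ => m (u.evalS m ρ) (v.evalS m ρ)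

/-- Evaluation of a term in the rationals (product is rational multiplication). -/
def evalQ {X : Type} : Term X → (X → ℚ) → ℚ
  | var x, F => F x
  | zero, _ => 0
  | smul c u, F => c * u.evalQ F
  | add u v, F => u.evalQ F + v.evalQ F
  | mul u v, F => u.evalQ F * v.evalQ F

/-- Evaluation of a term in a commutative `ℚ`-algebra. -/
def evalA {R : Type} [CommRing R] [Algebra ℚ R] {X : Type} :
    Term X → (X → R) → R
  | var x, ρ => ρ x
  | zero, _ => 0
  | smul c u, ρ => c • u.evalA ρ
  | add u v, ρ => u.evalA ρ + v.evalA ρ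
  | mul u v, ρ => u.evalA ρ * v.evalA ρ

end Term

/-- `m` is the `P`-product for the product rule `P`; that is, `m` satisfies the
two defining equations `(f*g)(ε) = f(ε)·g(ε)` and `δ_a (f*g) = P(f, δ_a f, g, δ_a g)`. -/
def IsPProduct {A : Type} (P : Term (Fin 4)) (m : Series A → Series A → Series A) : Prop :=
  (∀ f g : Series A, m f g [] = f [] * g []) ∧
  (∀ (f g : Series A) (a : A),
    deriv a (m f g) = P.evalS m ![f, deriv a f, g, deriv a g])

/-- The smallest congruence on terms generated by the axioms of
commutative (not necessarily unital) `ℚ`-algebras. -/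
inductive TEq {X : Type} : Term X → Term X → Prop
  | refl (u : Term X) : TEq u u
  | symm {u v : Term X} : TEq u v → TEq v u
  | trans {u v w : Term X} : TEq u v → TEq v w → TEq u w
  | smul_congr (c : ℚ) {u v : Term X} : TEq u v → TEq (.smul c u) (.smul c v)
  | add_congr {u u' v v' : Term X} : TEq u u' → TEq v v' → TEq (.add u v) (.add u' v')
  | mul_congr {u u' v v' : Term X} : TEq u u' → TEq v v' → TEq (.mul u v) (.mul u' v')
  | one_smul (u : Term X) : TEq (.smul 1 u) u
  | smul_smul (c d : ℚ) (u : Term X) : TEq (.smul c (.smul d u)) (.smul (c * d) u)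
  | add_smul (c d : ℚ) (u : Term X) : TEq (.smul (c + d) u) (.add (.smul c u) (.smul d u))
  | smul_add (c : ℚ) (u v : Term X) : TEq (.smul c (.add u v)) (.add (.smul c u) (.smul c v))
  | add_zero (u : Term X) : TEq (.add u .zero) u
  | add_assoc (u v w : Term X) : TEq (.add (.add u v) w) (.add u (.add v w))
  | add_comm (u v : Term X) : TEq (.add u v) (.add v u)
  | neg_cancel (u : Term X) : TEq (.add u (.smul (-1) u)) .zero
  | mul_addl (u v w : Term X) : TEq (.mul (.add u v) w) (.add (.mul u w) (.mul v w))
  | mul_smull (c : ℚ) (u v : Term X) : TEq (.mul (.smul c u) v) (.smul c (.mul u v))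
  | mul_assoc (u v w : Term X) : TEq (.mul (.mul u v) w) (.mul u (.mul v w))
  | mul_comm (u v : Term X) : TEq (.mul u v) (.mul v u)

/-- A product rule `P` (a term over the variables `x = 0, ẋ = 1, y = 2, ẏ = 3`)
is special: it satisfies (P-add), (P-assoc) and (P-comm) up to the congruence `TEq`.
In the first two equations the six variables are `x = 0, ẋ = 1, y = 2, ẏ = 3, z = 4, ż = 5`. -/
def Special (P : Term (Fin 4)) : Prop :=
  TEq (P.subst (![.add (.var 0) (.var 2), .add (.var 1) (.var 3), .var 4, .var 5] :
        Fin 4 → Term (Fin 6)))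
      (.add (P.subst (![.var 0, .var 1, .var 4, .var 5] : Fin 4 → Term (Fin 6)))
            (P.subst (![.var 2, .var 3, .var 4, .var 5] : Fin 4 → Term (Fin 6)))) ∧
  TEq (P.subst (![.var 0, .var 1, .mul (.var 2) (.var 4),
        P.subst (![.var 2, .var 3, .var 4, .var 5] : Fin 4 → Term (Fin 6))] :
        Fin 4 → Term (Fin 6)))
      (P.subst (![.mul (.var 0) (.var 2),
        P.subst (![.var 0, .var 1, .var 2, .var 3] : Fin 4 → Term (Fin 6)), .var 4, .var 5] :
        Fin 4 → Term (Fin 6))) ∧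
  TEq P (P.subst (![.var 2, .var 3, .var 0, .var 1] : Fin 4 → Term (Fin 4)))

/-- A binary operation on series is bilinear, associative and commutative. -/
def IsBAC {A : Type} (m : Series A → Series A → Series A) : Prop :=
  (∀ f g h : Series A, m (f + g) h = m f h + m g h) ∧
  (∀ (c : ℚ) (f g : Series A), m (c • f) g = c • m f g) ∧
  (∀ f g h : Series A, m f (g + h) = m f g + m f h) ∧
  (∀ (c : ℚ) (f g : Series A), m f (c • g) = c • m f g) ∧
  (∀ f g h : Series A, m (m f g) h = m f (m g h)) ∧
  (∀ f g : Series A, m f g = m g f)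

/-- The smallest set of series containing `0` and the generators `G`, closed under
scalar multiplication, addition, and the product `m`. -/
inductive InAlg {A : Type} (m : Series A → Series A → Series A) (G : Set (Series A)) :
    Series A → Prop
  | zero : InAlg m G 0
  | gen {g : Series A} : g ∈ G → InAlg m G g
  | smul (c : ℚ) {f : Series A} : InAlg m G f → InAlg m G (c • f)
  | add {f g : Series A} : InAlg m G f → InAlg m G g → InAlg m G (f + g)
  | mul {f g : Series A} : InAlg m G f → InAlg m G g → InAlg m G (m f g)

/-- `f` is `P`-finite (w.r.t. the `P`-product `m`): there are finitely many generators
`g 0 = f, g 1, …` all of whose left derivatives lie in the algebra they generate. -/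
def PFinite {A : Type} (m : Series A → Series A → Series A) (f : Series A) : Prop :=
  ∃ (k : ℕ) (g : Fin (k + 1) → Series A),
    g 0 = f ∧ ∀ (i : Fin (k + 1)) (a : A), InAlg m (Set.range g) (deriv a (g i))

/-- A `P`-automaton: output function `out` and transition function `tr`. -/
structure PAutomaton (A X : Type) where
  out : X → ℚ
  tr : A → X → Term X

/-- The `P`-extension of a function `D : X → Term X` to all terms. -/
def pext {X : Type} (P : Term (Fin 4)) (D : X → Term X) : Term X → Term X
  | .var x => D x
  | .zero => .zero
  | .smul c u => .smul c (pext P D u)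
  | .add u v => .add (pext P D u) (pext P D v)
  | .mul u v => P.subst ![u, pext P D u, v, pext P D v]

/-- Homomorphic extension of the output function of a `P`-automaton to all terms. -/
def PAutomaton.outT {A X : Type} (𝒜 : PAutomaton A X) (u : Term X) : ℚ :=
  u.evalQ 𝒜.out

/-- Extension of the (`P`-extended) transition function of a `P`-automaton to words. -/
def trWord {A X : Type} (P : Term (Fin 4)) (𝒜 : PAutomaton A X) :
    List A → Term X → Term X
  | [], u => u
  | a :: w, u => trWord P 𝒜 w (pext P (𝒜.tr a) u)

/-- The semantics of a `P`-automaton: the unique map with `⟦α⟧(ε) = F(α)` and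
`δ_a ⟦α⟧ = ⟦Δ̃_a α⟧`; concretely, `⟦α⟧(w) = F(Δ̃_w α)`. -/
def asem {A X : Type} (P : Term (Fin 4)) (𝒜 : PAutomaton A X) (u : Term X) : Series A :=
  fun w => (trWord P 𝒜 w u).evalQ 𝒜.out

/-- `ℚ[X]⁰`: polynomials in commuting variables `X` with zero constant term. -/
noncomputable def Aug (X : Type) : Submodule ℚ (MvPolynomial X ℚ) where
  carrier := {p | MvPolynomial.coeff 0 p = 0}
  add_mem' := by
    intro a b ha hb
    simp only [Set.mem_setOf_eq, MvPolynomial.coeff_add] at *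
    rw [ha, hb, add_zero]
  zero_mem' := by simp
  smul_mem' := by
    intro c p hp
    simp only [Set.mem_setOf_eq, MvPolynomial.coeff_smul] at *
    rw [hp, smul_zero]

/-- The variable `x` as an element of `ℚ[X]⁰`. -/
noncomputable def Aug.var {X : Type} (x : X) : Aug X :=
  ⟨MvPolynomial.X x, by
    show MvPolynomial.coeff 0 (MvPolynomial.X x) = 0
    simp [MvPolynomial.coeff_X']⟩

/-- The product of two elements of `ℚ[X]⁰`, again in `ℚ[X]⁰`. -/
noncomputable def Aug.mul {X : Type} (p q : Aug X) : Aug X :=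
  ⟨(p : MvPolynomial X ℚ) * (q : MvPolynomial X ℚ), by
    show MvPolynomial.coeff 0 _ = 0
    have hp : MvPolynomial.constantCoeff (p : MvPolynomial X ℚ) = 0 := p.2
    have hq : MvPolynomial.constantCoeff (q : MvPolynomial X ℚ) = 0 := q.2
    have := map_mul MvPolynomial.constantCoeff (p : MvPolynomial X ℚ) (q : MvPolynomial X ℚ)
    simpa [MvPolynomial.constantCoeff_eq, hp, hq] using this⟩

/-- A polynomial `P`-automaton over variables `X`. -/
structure PolyAutomaton (A X : Type) where
  out : X → ℚ
  tr : A → X → Aug X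

/-- Extension to words of a family of (extended) transition maps on `ℚ[X]⁰`. -/
noncomputable def trWordP {A X : Type} (Dt : A → (Aug X →ₗ[ℚ] Aug X)) : List A → Aug X → Aug X
  | [], p => p
  | a :: w, p => trWordP Dt w (Dt a p)

/-- The ideal of `ℚ[X]` generated by all polynomials reachable from the initial
variable `x1` by words of length at most `n`. -/
noncomputable def reachIdeal {A X : Type} (Dt : A → (Aug X →ₗ[ℚ] Aug X)) (x1 : X) (n : ℕ) :
    Ideal (MvPolynomial X ℚ) :=
  Ideal.span {p : MvPolynomial X ℚ |
    ∃ w : List A, w.length ≤ n ∧ p = ((trWordP Dt w (Aug.var x1) : Aug X) : MvPolynomial X ℚ)}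


section Auxiliary

open Term

/-- Soundness of the congruence `TEq` for evaluation in a commutative `ℚ`-algebra. -/
lemma TEq.evalA_eq {R : Type} [CommRing R] [Algebra ℚ R] {X : Type} {u v : Term X}
    (h : TEq u v) (ρ : X → R) : u.evalA ρ = v.evalA ρ := by
  induction h with
  | refl u => rfl
  | symm _ ih => exact ih.symm
  | trans _ _ ih1 ih2 => exact ih1.trans ih2
  | smul_congr c _ ih => simp [Term.evalA, ih]
  | add_congr _ _ ih1 ih2 => simp [Term.evalA, ih1, ih2]
  | mul_congr _ _ ih1 ih2 => simp [Term.evalA, ih1, ih2]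
  | one_smul u => simp [Term.evalA]
  | smul_smul c d u => simp [Term.evalA, _root_.smul_smul]
  | add_smul c d u => simp [Term.evalA, _root_.add_smul]
  | smul_add c u v => simp [Term.evalA, _root_.smul_add]
  | add_zero u => simp [Term.evalA]
  | add_assoc u v w => simp [Term.evalA, _root_.add_assoc]
  | add_comm u v => simp [Term.evalA, _root_.add_comm]
  | neg_cancel u => simp [Term.evalA]
  | mul_addl u v w => simp [Term.evalA, add_mul]
  | mul_smull c u v => simp [Term.evalA, smul_mul_assoc]
  | mul_assoc u v w => simp [Term.evalA, _root_.mul_assoc]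
  | mul_comm u v => simp [Term.evalA, _root_.mul_comm]

lemma evalA_subst {R : Type} [CommRing R] [Algebra ℚ R] {X Y : Type}
    (u : Term X) (ρ : X → Term Y) (σ : Y → R) :
    (u.subst ρ).evalA σ = u.evalA (fun x => (ρ x).evalA σ) := by
  induction u with
  | var x => rfl
  | zero => rfl
  | smul c u ih => simp [Term.subst, Term.evalA, ih]
  | add u v ih1 ih2 => simp [Term.subst, Term.evalA, ih1, ih2]
  | mul u v ih1 ih2 => simp [Term.subst, Term.evalA, ih1, ih2]

lemma map_evalA {R S : Type} [CommRing R] [Algebra ℚ R] [CommRing S] [Algebra ℚ S]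
    (φ : R →ₐ[ℚ] S) {X : Type} (u : Term X) (ρ : X → R) :
    φ (u.evalA ρ) = u.evalA (fun x => φ (ρ x)) := by
  induction u with
  | var x => rfl
  | zero => simp [Term.evalA]
  | smul c u ih => simp [Term.evalA, ih]
  | add u v ih1 ih2 => simp [Term.evalA, ih1, ih2]
  | mul u v ih1 ih2 => simp [Term.evalA, ih1, ih2]

/-- For a special product rule, `P(a, b, 0, 0) = 0` in any commutative `ℚ`-algebra. -/
lemma special_vanish {P : Term (Fin 4)} (hP : Special P)
    {R : Type} [CommRing R] [Algebra ℚ R] (a b : R) :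
    P.evalA ![a, b, 0, 0] = 0 := by
  -- first: P(0,0,z,ż) = 0
  have key : ∀ z w : R, P.evalA ![(0 : R), 0, z, w] = 0 := by
    intro z w
    have h := hP.1.evalA_eq (![0, 0, 0, 0, z, w] : Fin 6 → R)
    simp only [Term.evalA] at h
    rw [evalA_subst, evalA_subst, evalA_subst] at h
    have e1 : (fun x => Term.evalA
        ((![.add (.var 0) (.var 2), .add (.var 1) (.var 3), .var 4, .var 5] :
          Fin 4 → Term (Fin 6)) x) (![0, 0, 0, 0, z, w] : Fin 6 → R)) =
        ![(0 : R), 0, z, w] := by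
      funext i; fin_cases i <;> first | rfl | simp [Term.evalA]
    have e2 : (fun x => Term.evalA
        ((![.var 0, .var 1, .var 4, .var 5] : Fin 4 → Term (Fin 6)) x)
          (![0, 0, 0, 0, z, w] : Fin 6 → R)) = ![(0 : R), 0, z, w] := by
      funext i; fin_cases i <;> first | rfl | simp [Term.evalA]
    have e3 : (fun x => Term.evalA
        ((![.var 2, .var 3, .var 4, .var 5] : Fin 4 → Term (Fin 6)) x)
          (![0, 0, 0, 0, z, w] : Fin 6 → R)) = ![(0 : R), 0, z, w] := by
      funext i; fin_cases i <;> first | rfl | simp [Term.evalA]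
    rw [e1, e2, e3] at h
    exact left_eq_add.mp h
  -- commutativity: P(a,b,0,0) = P(0,0,a,b)
  have hc := hP.2.2.evalA_eq (![a, b, 0, 0] : Fin 4 → R)
  rw [evalA_subst] at hc
  have e : (fun x => Term.evalA
      ((![.var 2, .var 3, .var 0, .var 1] : Fin 4 → Term (Fin 4)) x)
        (![a, b, 0, 0] : Fin 4 → R)) = ![(0 : R), 0, a, b] := by
    funext i; fin_cases i <;> first | rfl | simp [Term.evalA]
  rw [e] at hc
  rw [hc, key]

/-- `P(p, p', q, q')` lies in the ideal generated by `q` and `q'`. -/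
lemma evalA_mem_span {P : Term (Fin 4)} (hP : Special P)
    {R : Type} [CommRing R] [Algebra ℚ R] (p p' q q' : R) :
    P.evalA ![p, p', q, q'] ∈ Ideal.span {q, q'} := by
  set I := Ideal.span ({q, q'} : Set R)
  rw [← Ideal.Quotient.eq_zero_iff_mem]
  have hq : Ideal.Quotient.mk I q = 0 :=
    Ideal.Quotient.eq_zero_iff_mem.mpr (Ideal.subset_span (by simp))
  have hq' : Ideal.Quotient.mk I q' = 0 :=
    Ideal.Quotient.eq_zero_iff_mem.mpr (Ideal.subset_span (by simp))
  have := map_evalA (Ideal.Quotient.mkₐ ℚ I) P ![p, p', q, q']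
  have e : (fun x => (Ideal.Quotient.mkₐ ℚ I) ((![p, p', q, q'] : Fin 4 → R) x)) =
      ![Ideal.Quotient.mk I p, Ideal.Quotient.mk I p', 0, 0] := by
    funext i; fin_cases i <;> simp [Ideal.Quotient.mkₐ_eq_mk, hq, hq']
  calc Ideal.Quotient.mk I (P.evalA ![p, p', q, q'])
      = (Ideal.Quotient.mkₐ ℚ I) (P.evalA ![p, p', q, q']) := rfl
    _ = P.evalA ![Ideal.Quotient.mk I p, Ideal.Quotient.mk I p', 0, 0] := by rw [this, e]
    _ = 0 := special_vanish hP _ _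

lemma trWordP_append {A X : Type} (Dt : A → (Aug X →ₗ[ℚ] Aug X)) (w : List A) (a : A)
    (p : Aug X) : trWordP Dt (w ++ [a]) p = Dt a (trWordP Dt w p) := by
  induction w generalizing p with
  | nil => rfl
  | cons b w ih => simp [trWordP, ih]

lemma reachIdeal_mono {A X : Type} (Dt : A → (Aug X →ₗ[ℚ] Aug X)) (x1 : X)
    {n m : ℕ} (h : n ≤ m) : reachIdeal Dt x1 n ≤ reachIdeal Dt x1 m := by
  apply Ideal.span_mono
  rintro p ⟨w, hw, rfl⟩
  exact ⟨w, hw.trans h, rfl⟩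

lemma mem_reachIdeal_of_le {A X : Type} (Dt : A → (Aug X →ₗ[ℚ] Aug X)) (x1 : X)
    {n : ℕ} (w : List A) (hw : w.length ≤ n) :
    ((trWordP Dt w (Aug.var x1) : Aug X) : MvPolynomial X ℚ) ∈ reachIdeal Dt x1 n :=
  Ideal.subset_span ⟨w, hw, rfl⟩

end Auxiliary

section Key

variable {A X : Type} {P : Term (Fin 4)}

/-- Key closure property: the derivative of any `ℚ[X]⁰` element of `I_n` lies in `I_{n+1}`. -/
lemma deriv_mem {P : Term (Fin 4)} (hP : Special P)
    (Dt : A → (Aug X →ₗ[ℚ] Aug X)) (x1 : X)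
    (hmul : ∀ (a : A) (p q : Aug X),
      ((Dt a (Aug.mul p q) : Aug X) : MvPolynomial X ℚ) =
        Term.evalA P ![(p : MvPolynomial X ℚ), ((Dt a p : Aug X) : MvPolynomial X ℚ),
          ((q : Aug X) : MvPolynomial X ℚ), ((Dt a q : Aug X) : MvPolynomial X ℚ)])
    (n : ℕ) (a : A) (q : Aug X) (hq : (q : MvPolynomial X ℚ) ∈ reachIdeal Dt x1 n) :
    ((Dt a q : Aug X) : MvPolynomial X ℚ) ∈ reachIdeal Dt x1 (n + 1) := by
  have main : ∀ x ∈ reachIdeal Dt x1 n,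
      x ∈ reachIdeal Dt x1 n ∧ ∃ q' : Aug X, (q' : MvPolynomial X ℚ) = x ∧
        ((Dt a q' : Aug X) : MvPolynomial X ℚ) ∈ reachIdeal Dt x1 (n + 1) := by
    intro x hx
    refine Submodule.span_induction ?_ ?_ ?_ ?_ hx
    · rintro x ⟨w, hw, rfl⟩
      refine ⟨Ideal.subset_span ⟨w, hw, rfl⟩, trWordP Dt w (Aug.var x1), rfl, ?_⟩
      rw [← trWordP_append]
      exact mem_reachIdeal_of_le Dt x1 (w ++ [a]) (by simpa using Nat.succ_le_succ hw)
    · exact ⟨Ideal.zero_mem _, 0, by simp, by simp⟩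
    · rintro x y hx hy ⟨hx1, qx, hqx, hqx'⟩ ⟨hy1, qy, hqy, hqy'⟩
      exact ⟨Ideal.add_mem _ hx1 hy1, qx + qy, by simp [hqx, hqy],
        by simpa using Ideal.add_mem _ hqx' hqy'⟩
    · rintro r x hx ⟨hx1, qx, hqx, hqx'⟩
      refine ⟨Submodule.smul_mem _ _ hx1, ?_⟩
      set c := MvPolynomial.constantCoeff r with hc
      have hr0 : r - MvPolynomial.C c ∈ Aug X := by
        show MvPolynomial.coeff 0 (r - MvPolynomial.C c) = 0
        simp [MvPolynomial.coeff_sub, ← MvPolynomial.constantCoeff_eq]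
        exact sub_self _
      set r0 : Aug X := ⟨r - MvPolynomial.C c, hr0⟩ with hr0def
      refine ⟨c • qx + Aug.mul r0 qx, ?_, ?_⟩
      · show c • (qx : MvPolynomial X ℚ) + (r - MvPolynomial.C c) * (qx : MvPolynomial X ℚ)
          = r • x
        rw [hqx, smul_eq_mul, MvPolynomial.smul_eq_C_mul]
        ring
      · rw [map_add, map_smul]
        refine Ideal.add_mem _ ?_ ?_
        · show c • ((Dt a qx : Aug X) : MvPolynomial X ℚ) ∈ _
          rw [MvPolynomial.smul_eq_C_mul]
          exact Ideal.mul_mem_left _ _ hqx'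
        · rw [hmul]
          refine Ideal.span_le.mpr ?_ (evalA_mem_span hP _ _ _ _)
          rintro y (rfl | rfl)
          · rw [hqx]
            exact reachIdeal_mono Dt x1 (Nat.le_succ n) hx1
          · exact hqx'
  obtain ⟨-, q', hq', hmem⟩ := main _ hq
  have : q' = q := Subtype.coe_injective hq'
  rwa [this] at hmem

lemma reachIdeal_stab {P : Term (Fin 4)} (hP : Special P)
    (Dt : A → (Aug X →ₗ[ℚ] Aug X)) (x1 : X)
    (hmul : ∀ (a : A) (p q : Aug X),
      ((Dt a (Aug.mul p q) : Aug X) : MvPolynomial X ℚ) =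
        Term.evalA P ![(p : MvPolynomial X ℚ), ((Dt a p : Aug X) : MvPolynomial X ℚ),
          ((q : Aug X) : MvPolynomial X ℚ), ((Dt a q : Aug X) : MvPolynomial X ℚ)])
    (N : ℕ) (hN : reachIdeal Dt x1 N = reachIdeal Dt x1 (N + 1)) :
    ∀ k, reachIdeal Dt x1 (N + k) = reachIdeal Dt x1 N := by
  intro k
  induction k with
  | zero => rfl
  | succ k ih =>
    refine le_antisymm ?_ (reachIdeal_mono Dt x1 (Nat.le_add_right N (k + 1)))
    refine Ideal.span_le.mpr ?_
    rintro p ⟨w, hw, rfl⟩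
    rcases Nat.lt_or_ge w.length (N + k + 1) with h | h
    · rw [← ih]
      exact mem_reachIdeal_of_le Dt x1 w (Nat.lt_succ_iff.mp h)
    · rcases w.eq_nil_or_concat with rfl | ⟨w', b, rfl⟩
      · simp only [List.length_nil] at h; omega
      · have hw' : w'.length ≤ N + k := by
          simp only [List.length_concat] at hw
          omega
        rw [List.concat_eq_append, trWordP_append]
        have h1 : ((trWordP Dt w' (Aug.var x1) : Aug X) : MvPolynomial X ℚ) ∈
            reachIdeal Dt x1 (N + k) := mem_reachIdeal_of_le Dt x1 w' hw'
        rw [ih] at h1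
        have h2 := deriv_mem hP Dt x1 hmul N b _ h1
        rw [← hN] at h2
        exact h2

end Key

/-- **Zeroness characterisation.** If `N` is a stabilisation index of the chain of
reachability ideals, then the recognised series `⟦x₁⟧_𝒜(w) = F(Δ_w x₁)` is the zero
series iff it vanishes on all words of length at most `N`. -/
theorem zeroness_characterisation {A X : Type} [Fintype A] [Fintype X]
    (P : Term (Fin 4)) (hP : Special P)
    (𝒜 : PolyAutomaton A X) (x1 : X)
    (Dt : A → (Aug X →ₗ[ℚ] Aug X))
    (hvar : ∀ (a : A) (x : X), Dt a (Aug.var x) = 𝒜.tr a x)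
    (hmul : ∀ (a : A) (p q : Aug X),
      ((Dt a (Aug.mul p q) : Aug X) : MvPolynomial X ℚ) =
        Term.evalA P ![(p : MvPolynomial X ℚ), ((Dt a p : Aug X) : MvPolynomial X ℚ),
          ((q : Aug X) : MvPolynomial X ℚ), ((Dt a q : Aug X) : MvPolynomial X ℚ)])
    (N : ℕ) (hN : reachIdeal Dt x1 N = reachIdeal Dt x1 (N + 1)) :
    (∀ w : List A,
        MvPolynomial.eval 𝒜.out ((trWordP Dt w (Aug.var x1) : Aug X) : MvPolynomial X ℚ) = 0) ↔
    (∀ w : List A, w.length ≤ N →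
        MvPolynomial.eval 𝒜.out ((trWordP Dt w (Aug.var x1) : Aug X) : MvPolynomial X ℚ) = 0) := by
  constructor
  · intro h w _
    exact h w
  · intro h w
    have hstab := reachIdeal_stab hP Dt x1 hmul N hN
    have hmem : ((trWordP Dt w (Aug.var x1) : Aug X) : MvPolynomial X ℚ) ∈
        reachIdeal Dt x1 N := by
      rw [← hstab w.length]
      exact mem_reachIdeal_of_le Dt x1 w (Nat.le_add_left _ _)
    have hker : reachIdeal Dt x1 N ≤ RingHom.ker (MvPolynomial.eval 𝒜.out) := by
      refine Ideal.span_le.mpr ?_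
      rintro p ⟨w', hw', rfl⟩
      exact h w' hw'
    exact hker hmem

end PSeries
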